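/- Let A be a unital K-algebra with sr(A) = n ≥ 2 and er(A) < n. Then for any (possibly non-unital) K-algebra B and two-sided ideal I of B with B/I ≅ A and sr(I) ≤ n, one has sr(B) = n. -/

import Mathlib

open scoped BigOperators

variable {R : Type*}

/-- A column is unimodular if its entries admit a left Bezout relation summing to `1`. -/
def Unimodular [Ring R] {m : ℕ} (b : Fin m → R) : Prop :=
  ∃ a : Fin m → R, ∑ i, a i * b i = 1

/-- An `(n+1)`-column is reducible if adding left multiples of the last entry to the first
`n` entries yields a unimodular `n`-column. -/
def Reducible [Ring R] {n : ℕ} (b : Fin (n + 1) → R) : Prop :=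
  ∃ v : Fin n → R, Unimodular (fun i : Fin n => b i.castSucc + v i * b (Fin.last n))

/-- The stable range condition: every unimodular column of length `> n` is reducible. -/
def SRleq (R : Type*) [Ring R] (n : ℕ) : Prop :=
  ∀ m : ℕ, n ≤ m → ∀ b : Fin (m + 1) → R, Unimodular b → Reducible b

/-- The Bass stable rank, as an element of `ℕ∞`. -/
noncomputable def sr (R : Type*) [Ring R] : ℕ∞ :=
  sInf {c : ℕ∞ | ∃ n : ℕ, c = n ∧ SRleq R n}

/-- Elementary matrices (transvections). -/
def IsElemMat [Ring R] {t : ℕ} (M : Matrix (Fin t) (Fin t) R) : Prop :=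
  ∃ (i j : Fin t) (c : R), i ≠ j ∧ M = 1 + Matrix.single i j c

/-- `ERleq R k` : for every `t ≥ k + 1`, the elementary group `E_t(R)` acts transitively on
unimodular `t`-columns. -/
def ERleq (R : Type*) [Ring R] (k : ℕ) : Prop :=
  ∀ t : ℕ, k + 1 ≤ t → ∀ b c : Fin t → R, Unimodular b → Unimodular c →
    ∃ L : List (Matrix (Fin t) (Fin t) R), (∀ M ∈ L, IsElemMat M) ∧ L.prod.mulVec b = c

/-- The elementary rank, as an element of `ℕ∞`. -/
noncomputable def er (R : Type*) [Ring R] : ℕ∞ :=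
  sInf {c : ℕ∞ | ∃ k : ℕ, c = k ∧ ERleq R k}

/-- Vaserstein's `I`-unimodular columns relative to a two-sided ideal `I` of `R`:
the first entry is congruent to `1` mod `I`, the others lie in `I`, and there is a Bezout
relation of the same shape. -/
def RelUnimodular [Ring R] (I : TwoSidedIdeal R) {m : ℕ} (b : Fin (m + 1) → R) : Prop :=
  b 0 - 1 ∈ I ∧ (∀ i, i ≠ 0 → b i ∈ I) ∧
    ∃ a : Fin (m + 1) → R, (a 0 - 1 ∈ I) ∧ (∀ i, i ≠ 0 → a i ∈ I) ∧ ∑ i, a i * b i = 1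

def RelReducible [Ring R] (I : TwoSidedIdeal R) {m : ℕ} (b : Fin (m + 2) → R) : Prop :=
  ∃ v : Fin (m + 1) → R, (∀ i, v i ∈ I) ∧
    RelUnimodular I (fun i : Fin (m + 1) => b i.castSucc + v i * b (Fin.last (m + 1)))

/-- Relative (Vaserstein) stable rank `≤ n` for a two-sided ideal: every `I`-unimodular
column of length at least `n + 1` is reducible. -/
def RelSRleq [Ring R] (I : TwoSidedIdeal R) (n : ℕ) : Prop :=
  ∀ m : ℕ, n ≤ m + 1 → ∀ b : Fin (m + 2) → R, RelUnimodular I b → RelReducible I b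

/-- The relative stable rank of a two-sided ideal, as an element of `ℕ∞`. -/
noncomputable def relSr [Ring R] (I : TwoSidedIdeal R) : ℕ∞ :=
  sInf {c : ℕ∞ | ∃ n : ℕ, c = n ∧ RelSRleq I n}

/-- The canonical copy of a non-unital ring `B` as a two-sided ideal of its
`ℤ`-unitization. -/
def nuIdeal (B : Type*) [NonUnitalRing B] : TwoSidedIdeal (Unitization ℤ B) :=
  TwoSidedIdeal.mk' {x | x.fst = 0}
    (by simp)
    (fun hx hy => by simp_all)
    (fun hx => by simp_all)
    (fun {x y} hy => by simp_all)
    (fun {x y} hx => by simp_all)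

/-- The lift of a two-sided ideal of a non-unital ring `B` to a two-sided ideal of the
`ℤ`-unitization of `B`. -/
def liftIdeal {B : Type*} [NonUnitalRing B] (I : TwoSidedIdeal B) :
    TwoSidedIdeal (Unitization ℤ B) :=
  TwoSidedIdeal.mk' {x | x.fst = 0 ∧ x.snd ∈ I}
    ⟨by simp, by simpa using I.zero_mem⟩
    (fun hx hy => ⟨by simp [hx.1, hy.1], by simpa using I.add_mem hx.2 hy.2⟩)
    (fun hx => ⟨by simp [hx.1], by simpa using I.neg_mem hx.2⟩)
    (fun {x y} hy => ⟨by simp [hy.1], by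
        simp only [Unitization.snd_mul, hy.1, zero_smul, add_zero, Set.mem_setOf_eq]
        exact I.add_mem (I.zsmul_mem _ hy.2) (I.mul_mem_left _ _ hy.2)⟩)
    (fun {x y} hx => ⟨by simp [hx.1], by
        simp only [Unitization.snd_mul, hx.1, zero_smul, zero_add, Set.mem_setOf_eq]
        exact I.add_mem (I.zsmul_mem _ hx.2) (I.mul_mem_right _ _ hx.2)⟩)

/-- The Bass stable rank of a (possibly non-unital) ring, defined via Vaserstein's relative
stable rank of its canonical copy inside its `ℤ`-unitization. -/
noncomputable def srNU (B : Type*) [NonUnitalRing B] : ℕ∞ := relSr (R := Unitization ℤ B) (nuIdeal B)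

-- ===================== auxiliary generic lemmas =====================

section Aux

variable [Ring R]

theorem SRleq_mono {k k' : ℕ} (h : k ≤ k') (hP : SRleq R k) : SRleq R k' :=
  fun m hm b hb => hP m (le_trans h hm) b hb

theorem ERleq_mono {k k' : ℕ} (h : k ≤ k') (hP : ERleq R k) : ERleq R k' :=
  fun t ht => hP t (by omega)

theorem RelSRleq_mono {I : TwoSidedIdeal R} {k k' : ℕ} (h : k ≤ k') (hP : RelSRleq I k) :
    RelSRleq I k' :=
  fun m hm => hP m (by omega)

theorem pred_of_sInf_lt {P : ℕ → Prop} (hmono : ∀ {k k' : ℕ}, k ≤ k' → P k → P k') {n : ℕ}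
    (h : sInf {c : ℕ∞ | ∃ k : ℕ, c = k ∧ P k} < (n : ℕ∞)) : P (n - 1) := by
  by_contra hP
  have hlb : (n : ℕ∞) ≤ sInf {c : ℕ∞ | ∃ k : ℕ, c = k ∧ P k} := by
    apply le_sInf
    rintro c ⟨k, rfl, hk⟩
    have hkn : ¬ k ≤ n - 1 := fun hle => hP (hmono hle hk)
    exact Nat.cast_le.mpr (by omega)
  exact absurd (lt_of_le_of_lt hlb h) (lt_irrefl _)

theorem of_sInf_le {P : ℕ → Prop} (hmono : ∀ {k k' : ℕ}, k ≤ k' → P k → P k') {n : ℕ}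
    (h : sInf {c : ℕ∞ | ∃ k : ℕ, c = k ∧ P k} ≤ (n : ℕ∞)) : P n := by
  have := pred_of_sInf_lt hmono (n := n + 1)
    (lt_of_le_of_lt h (by exact_mod_cast Nat.lt_succ_self n))
  simpa using this

end Aux

section Shapes

variable [Ring R] {N J : TwoSidedIdeal R}

/-- columns congruent to `e₁` modulo an ideal. -/
def ColShape (N : TwoSidedIdeal R) {m : ℕ} (b : Fin (m + 1) → R) : Prop :=
  b 0 - 1 ∈ N ∧ ∀ i, i ≠ 0 → b i ∈ N

/-- matrices congruent to `1` modulo an ideal. -/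
def MatCongrOne (N : TwoSidedIdeal R) {t : ℕ} (M : Matrix (Fin t) (Fin t) R) : Prop :=
  ∀ i j, M i j - (1 : Matrix (Fin t) (Fin t) R) i j ∈ N

theorem matCongrOne_one {t : ℕ} : MatCongrOne N (1 : Matrix (Fin t) (Fin t) R) :=
  fun i j => by simpa using N.zero_mem

theorem matCongrOne_mul {t : ℕ} {M M' : Matrix (Fin t) (Fin t) R}
    (hM : MatCongrOne N M) (hM' : MatCongrOne N M') : MatCongrOne N (M * M') := by
  intro i j
  have hrw : (M * M') i j - (1 : Matrix (Fin t) (Fin t) R) i j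
      = (∑ k, (M i k - (1 : Matrix (Fin t) (Fin t) R) i k) * M' k j)
        + (M' i j - (1 : Matrix (Fin t) (Fin t) R) i j) := by
    rw [Matrix.mul_apply]
    have h1 : ∀ k, M i k * M' k j
        = (M i k - (1 : Matrix (Fin t) (Fin t) R) i k) * M' k j
          + (1 : Matrix (Fin t) (Fin t) R) i k * M' k j := by
      intro k; noncomm_ring
    rw [Finset.sum_congr rfl (fun k _ => h1 k), Finset.sum_add_distrib]
    have h2 : ∑ k, (1 : Matrix (Fin t) (Fin t) R) i k * M' k j = M' i j := by
      simp [Matrix.one_apply, ite_mul]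
    rw [h2]
    abel
  rw [hrw]
  exact N.add_mem (N.finsetSum_mem _ _ fun k _ => N.mul_mem_right _ _ (hM i k)) (hM' i j)

theorem matCongrOne_transvection {t : ℕ} {i j : Fin t} {c : R} (hc : c ∈ N) :
    MatCongrOne N (1 + Matrix.single i j c) := by
  intro a b
  have : (1 + Matrix.single i j c) a b - (1 : Matrix (Fin t) (Fin t) R) a b
      = Matrix.single i j c a b := by
    simp [Matrix.add_apply]
  rw [this, Matrix.single]
  simp only [Matrix.of_apply]
  split
  · exact hc
  · exact N.zero_mem

theorem colShape_vecMul {m : ℕ} {a : Fin (m + 1) → R} {M : Matrix (Fin (m + 1)) (Fin (m + 1)) R}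
    (ha : ColShape N a) (hM : MatCongrOne N M) : ColShape N (Matrix.vecMul a M) := by
  constructor
  · have hrw : Matrix.vecMul a M 0 - 1
        = ((a 0 - 1) * M 0 0 + (M 0 0 - (1 : Matrix (Fin (m+1)) (Fin (m+1)) R) 0 0))
          + ∑ i : Fin m, a i.succ * M i.succ 0 := by
      rw [Matrix.vecMul, dotProduct, Fin.sum_univ_succ]
      have h1 : (1 : Matrix (Fin (m+1)) (Fin (m+1)) R) 0 0 = 1 := by simp [Matrix.one_apply]
      rw [h1]; noncomm_ring
    rw [hrw]
    refine N.add_mem (N.add_mem (N.mul_mem_right _ _ ha.1) (hM 0 0)) ?_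
    exact N.finsetSum_mem _ _ fun i _ => N.mul_mem_right _ _ (ha.2 _ (Fin.succ_ne_zero i))
  · intro jj hjj
    have hrw : Matrix.vecMul a M jj
        = ((a 0 - 1) * M 0 jj + (M 0 jj - (1 : Matrix (Fin (m+1)) (Fin (m+1)) R) 0 jj))
          + ∑ i : Fin m, a i.succ * M i.succ jj := by
      rw [Matrix.vecMul, dotProduct, Fin.sum_univ_succ]
      have h1 : (1 : Matrix (Fin (m+1)) (Fin (m+1)) R) 0 jj = 0 := by
        simp [Matrix.one_apply, (Ne.symm hjj)]
      rw [h1]; noncomm_ring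
    rw [hrw]
    refine N.add_mem (N.add_mem (N.mul_mem_right _ _ ha.1) (hM 0 jj)) ?_
    exact N.finsetSum_mem _ _ fun i _ => N.mul_mem_right _ _ (ha.2 _ (Fin.succ_ne_zero i))

theorem colShape_mulVec {m : ℕ} {u : Fin (m + 1) → R} {M : Matrix (Fin (m + 1)) (Fin (m + 1)) R}
    (hu : ColShape N u) (hM : MatCongrOne N M) : ColShape N (Matrix.mulVec M u) := by
  constructor
  · have hrw : Matrix.mulVec M u 0 - 1
        = ((M 0 0 - (1 : Matrix (Fin (m+1)) (Fin (m+1)) R) 0 0) * u 0 + (u 0 - 1))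
          + ∑ i : Fin m, M 0 i.succ * u i.succ := by
      rw [Matrix.mulVec, dotProduct, Fin.sum_univ_succ]
      have h1 : (1 : Matrix (Fin (m+1)) (Fin (m+1)) R) 0 0 = 1 := by simp [Matrix.one_apply]
      rw [h1]; noncomm_ring
    rw [hrw]
    refine N.add_mem (N.add_mem (N.mul_mem_right _ _ (hM 0 0)) hu.1) ?_
    exact N.finsetSum_mem _ _ fun i _ => N.mul_mem_left _ _ (hu.2 _ (Fin.succ_ne_zero i))
  · intro jj hjj
    have hrw : Matrix.mulVec M u jj
        = ((M jj 0 - (1 : Matrix (Fin (m+1)) (Fin (m+1)) R) jj 0) * u 0)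
          + ∑ i : Fin m, M jj i.succ * u i.succ := by
      rw [Matrix.mulVec, dotProduct, Fin.sum_univ_succ]
      have h1 : (1 : Matrix (Fin (m+1)) (Fin (m+1)) R) jj 0 = 0 := by
        simp [Matrix.one_apply, hjj]
      rw [h1]; noncomm_ring
    rw [hrw]
    refine N.add_mem (N.mul_mem_right _ _ (hM jj 0)) ?_
    exact N.finsetSum_mem _ _ fun i _ => N.mul_mem_left _ _ (hu.2 _ (Fin.succ_ne_zero i))

theorem relUnimodular_of_le (h : ∀ x : R, x ∈ J → x ∈ N) {m : ℕ} {b : Fin (m + 1) → R}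
    (hb : RelUnimodular J b) : RelUnimodular N b := by
  obtain ⟨h0, hι, a, ha0, haι, hsum⟩ := hb
  exact ⟨h _ h0, fun i hi => h _ (hι i hi), a, h _ ha0, fun i hi => h _ (haι i hi), hsum⟩

theorem relUnimodular_mulVec {m : ℕ} {u : Fin (m + 1) → R}
    {M M' : Matrix (Fin (m + 1)) (Fin (m + 1)) R}
    (hM : MatCongrOne N M) (hM' : MatCongrOne N M') (hMM' : M * M' = 1)
    (hu : RelUnimodular N u) : RelUnimodular N (Matrix.mulVec M' u) := by
  obtain ⟨h0, hι, a, ha0, haι, hsum⟩ := hu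
  have hsh := colShape_mulVec (N := N) ⟨h0, hι⟩ hM'
  have hash := colShape_vecMul (N := N) ⟨ha0, haι⟩ hM
  refine ⟨hsh.1, hsh.2, Matrix.vecMul a M, hash.1, hash.2, ?_⟩
  have : ∑ i, Matrix.vecMul a M i * Matrix.mulVec M' u i
      = dotProduct (Matrix.vecMul a M) (Matrix.mulVec M' u) := rfl
  rw [this, Matrix.dotProduct_mulVec, Matrix.vecMul_vecMul, hMM', Matrix.vecMul_one]
  exact hsum

end Shapes

section Elem

variable {A : Type*} [Ring A]

theorem unimodular_e1 {t : ℕ} : Unimodular (fun i : Fin (t + 1) => if i = 0 then (1 : A) else 0) := by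
  refine ⟨fun i => if i = 0 then 1 else 0, ?_⟩
  rw [Fin.sum_univ_succ]
  simp [Fin.succ_ne_zero]

theorem transvection_inv_left {t : ℕ} {i j : Fin t} (hij : i ≠ j) (c : A) :
    (1 + Matrix.single i j (-c)) * (1 + Matrix.single i j c) = 1 := by
  have h0 : Matrix.single i j (-c) * Matrix.single i j c = 0 :=
    Matrix.single_mul_single_of_ne (-c) i j i (Ne.symm hij) c
  have hadd : Matrix.single i j (-c) + Matrix.single i j c = 0 := by
    rw [← Matrix.single_add]
    simp
  calc (1 + Matrix.single i j (-c)) * (1 + Matrix.single i j c)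
      = 1 + (Matrix.single i j (-c) + Matrix.single i j c)
        + Matrix.single i j (-c) * Matrix.single i j c := by noncomm_ring
    _ = 1 := by rw [h0, hadd]; simp

theorem exists_inv_list {t : ℕ} (L : List (Matrix (Fin t) (Fin t) A))
    (hL : ∀ M ∈ L, IsElemMat M) :
    ∃ L' : List (Matrix (Fin t) (Fin t) A), (∀ M ∈ L', IsElemMat M) ∧
      L'.prod * L.prod = 1 ∧ L.prod * L'.prod = 1 := by
  induction L with
  | nil => exact ⟨[], by simp, by simp, by simp⟩
  | cons T rest ih =>
    obtain ⟨L', hL', h1, h2⟩ := ih (fun M hM => hL M (List.mem_cons_of_mem _ hM))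
    obtain ⟨i, j, c, hij, hT⟩ := hL T (List.mem_cons_self)
    refine ⟨L' ++ [1 + Matrix.single i j (-c)], ?_, ?_, ?_⟩
    · intro M hM
      rcases List.mem_append.mp hM with h | h
      · exact hL' M h
      · rw [List.mem_singleton.mp h]
        exact ⟨i, j, -c, hij, rfl⟩
    · have hTT : (1 + Matrix.single i j (-c)) * T = 1 := by
        rw [hT]; exact transvection_inv_left hij c
      simp only [List.prod_append, List.prod_cons, List.prod_singleton, List.prod_nil, mul_one]
      calc L'.prod * (1 + Matrix.single i j (-c)) * (T * rest.prod)
          = L'.prod * ((1 + Matrix.single i j (-c)) * T) * rest.prod := by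
            noncomm_ring
        _ = L'.prod * rest.prod := by rw [hTT]; noncomm_ring
        _ = 1 := h1
    · have hTT : T * (1 + Matrix.single i j (-c)) = 1 := by
        rw [hT]
        have h0 : Matrix.single i j c * Matrix.single i j (-c) = 0 :=
          Matrix.single_mul_single_of_ne c i j i (Ne.symm hij) (-c)
        have hadd : Matrix.single i j c + Matrix.single i j (-c) = 0 := by
          rw [← Matrix.single_add]; simp
        calc (1 + Matrix.single i j c) * (1 + Matrix.single i j (-c))
            = 1 + (Matrix.single i j c + Matrix.single i j (-c))
              + Matrix.single i j c * Matrix.single i j (-c) := by noncomm_ring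
          _ = 1 := by rw [h0, hadd]; simp
      simp only [List.prod_append, List.prod_cons, List.prod_singleton, List.prod_nil, mul_one]
      calc T * rest.prod * (L'.prod * (1 + Matrix.single i j (-c)))
          = T * (rest.prod * L'.prod) * (1 + Matrix.single i j (-c)) := by noncomm_ring
        _ = T * (1 + Matrix.single i j (-c)) := by rw [h2]; noncomm_ring
        _ = 1 := hTT

end Elem

section Lift

variable {A : Type*} [Ring A] [Ring R] (ψ : R →+* A) {N : TwoSidedIdeal R}

theorem map_mulVec {t : ℕ} (M : Matrix (Fin t) (Fin t) R) (v : Fin t → R) :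
    (fun i => ψ (Matrix.mulVec M v i)) = Matrix.mulVec (M.map ψ) (fun j => ψ (v j)) := by
  funext i
  simp [Matrix.mulVec, dotProduct, Matrix.map_apply, map_sum]

theorem map_stdBasis {t : ℕ} (i j : Fin t) (c : R) :
    (Matrix.single i j c).map ψ = Matrix.single i j (ψ c) := by
  ext a b
  simp only [Matrix.map_apply, Matrix.single, Matrix.of_apply]
  split <;> simp

theorem lift_elem_list (hlift : ∀ a : A, ∃ r, r ∈ N ∧ ψ r = a) {t : ℕ}
    (L : List (Matrix (Fin t) (Fin t) A)) (hL : ∀ M ∈ L, IsElemMat M) :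
    ∃ M M' : Matrix (Fin t) (Fin t) R, MatCongrOne N M ∧ MatCongrOne N M' ∧
      M * M' = 1 ∧ M' * M = 1 ∧ M.map ψ = L.prod := by
  induction L with
  | nil =>
    refine ⟨1, 1, matCongrOne_one, matCongrOne_one, by simp, by simp, ?_⟩
    simp [Matrix.map_one ψ (map_zero ψ) (map_one ψ)]
  | cons T rest ih =>
    obtain ⟨M, M', hMc, hM'c, hMM', hM'M, hMψ⟩ := ih (fun M hM => hL M (List.mem_cons_of_mem _ hM))
    obtain ⟨i, j, c, hij, hT⟩ := hL T (List.mem_cons_self)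
    obtain ⟨r, hrN, hrψ⟩ := hlift c
    refine ⟨(1 + Matrix.single i j r) * M,
            M' * (1 + Matrix.single i j (-r)), ?_, ?_, ?_, ?_, ?_⟩
    · exact matCongrOne_mul (matCongrOne_transvection hrN) hMc
    · exact matCongrOne_mul hM'c (matCongrOne_transvection (N.neg_mem hrN))
    · have htt : M * (M' * (1 + Matrix.single i j (-r))) = 1 + Matrix.single i j (-r) := by
        rw [← mul_assoc, hMM', one_mul]
      calc (1 + Matrix.single i j r) * M * (M' * (1 + Matrix.single i j (-r)))
          = (1 + Matrix.single i j r) * (M * (M' * (1 + Matrix.single i j (-r)))) := by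
            rw [mul_assoc]
        _ = (1 + Matrix.single i j r) * (1 + Matrix.single i j (-r)) := by rw [htt]
        _ = 1 := by
            have := transvection_inv_left (A := R) hij (-r)
            simpa using this
    · have htt : (1 + Matrix.single i j (-r)) * ((1 + Matrix.single i j r) * M) = M := by
        rw [← mul_assoc, transvection_inv_left hij r, one_mul]
      calc M' * (1 + Matrix.single i j (-r)) * ((1 + Matrix.single i j r) * M)
          = M' * ((1 + Matrix.single i j (-r)) * ((1 + Matrix.single i j r) * M)) := by
            rw [mul_assoc]
        _ = M' * M := by rw [htt]
        _ = 1 := hM'M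
    · rw [List.prod_cons, hT]
      have hmm : ((1 + Matrix.single i j r) * M).map ψ
          = (1 + Matrix.single i j r).map ψ * M.map ψ := by
        exact Matrix.map_mul
      rw [hmm, hMψ]
      congr 1
      have : (1 + Matrix.single i j r).map ψ
          = (1 : Matrix (Fin t) (Fin t) R).map ψ + (Matrix.single i j r).map ψ := by
        ext a b; simp [Matrix.map_apply, Matrix.one_apply, Matrix.single_apply, apply_ite ψ]
      rw [this, map_stdBasis, hrψ, Matrix.map_one ψ (map_zero ψ) (map_one ψ)]

end Lift

section Upper

theorem upper_bound {R A : Type*} [Ring R] [Ring A] (ψ : R →+* A) (N J : TwoSidedIdeal R)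
    (hlift : ∀ a : A, ∃ r, r ∈ N ∧ ψ r = a)
    (hJN : ∀ x : R, x ∈ J ↔ x ∈ N ∧ ψ x = 0)
    (n : ℕ) (hn : 1 ≤ n) (hSR : SRleq A n) (hER : ERleq A (n - 1))
    (hJsr : RelSRleq J n) : RelSRleq N n := by
  intro m hm x hx
  classical
  obtain ⟨hx0, hxι, a, ha0N, haιN, hsum⟩ := hx
  have hlastne : (Fin.last (m + 1)) ≠ (0 : Fin (m + 2)) := by
    simp [Fin.ext_iff]
  have hlastN : x (Fin.last (m + 1)) ∈ N := hxι _ hlastne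
  set β : Fin (m + 2) → A := fun i => ψ (x i) with hβdef
  have hβ : Unimodular β := by
    refine ⟨fun i => ψ (a i), ?_⟩
    have h1 : ∑ i, ψ (a i) * β i = ψ (∑ i, a i * x i) := by
      rw [map_sum]
      exact Finset.sum_congr rfl fun i _ => by rw [hβdef, map_mul]
    rw [h1, hsum, map_one]
  obtain ⟨vbar, hvbar⟩ := hSR (m + 1) (by omega) β hβ
  choose vtil hvtilN hvtilψ using fun i => hlift (vbar i)
  set x' : Fin (m + 1) → R := fun i => x i.castSucc + vtil i * x (Fin.last (m + 1)) with hx'def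
  have hx'ψ : (fun i => ψ (x' i))
      = fun i : Fin (m + 1) => β i.castSucc + vbar i * β (Fin.last (m + 1)) := by
    funext i
    rw [hx'def, hβdef]
    simp [hvtilψ]
  have hx'shape : ColShape N x' := by
    constructor
    · have h1 : x' 0 - 1 = (x ((0 : Fin (m + 1)).castSucc) - 1) + vtil 0 * x (Fin.last (m + 1)) := by
        simp only [hx'def]; abel
      rw [h1, Fin.castSucc_zero]
      exact N.add_mem hx0 (N.mul_mem_left _ _ hlastN)
    · intro i hi
      have hics : i.castSucc ≠ (0 : Fin (m + 2)) := fun h =>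
        hi (Fin.castSucc_injective _ (by rw [h, Fin.castSucc_zero]))
      rw [hx'def]
      exact N.add_mem (hxι _ hics) (N.mul_mem_left _ _ hlastN)
  obtain ⟨L, hLe, hLp⟩ := hER (m + 1) (by omega) _ _ hvbar unimodular_e1
  obtain ⟨M, M', hMc, hM'c, hMM', hM'M, hMψ⟩ := lift_elem_list ψ hlift L hLe
  set y : Fin (m + 1) → R := Matrix.mulVec M x' with hydef
  have hyshape : ColShape N y := colShape_mulVec hx'shape hMc
  have hyψ : (fun i => ψ (y i)) = (fun i : Fin (m + 1) => if i = 0 then (1 : A) else 0) := by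
    have h1 := map_mulVec ψ M x'
    rw [← hydef] at h1
    rw [h1, hMψ]
    have h2 : (fun j => ψ (x' j)) = fun i : Fin (m + 1) => β i.castSucc + vbar i * β (Fin.last (m + 1)) := hx'ψ
    rw [h2, hLp]
  have hmemJ : ∀ r : R, r ∈ N → ψ r = 0 → r ∈ J := fun r h1 h2 => (hJN r).mpr ⟨h1, h2⟩
  have hy0J : y 0 - 1 ∈ J := by
    refine hmemJ _ hyshape.1 ?_
    have h0 := congrFun hyψ 0
    simp at h0
    rw [map_sub, map_one, h0, sub_self]
  have hyiJ : ∀ i : Fin (m + 1), i ≠ 0 → y i ∈ J := by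
    intro i hi
    refine hmemJ _ (hyshape.2 i hi) ?_
    have h0 := congrFun hyψ i
    simpa [hi] using h0
  set ahat : Fin (m + 1) → R := fun i => a i.castSucc with hahatdef
  set aL : R := a (Fin.last (m + 1)) - ∑ i, ahat i * vtil i with haLdef
  have hH : (∑ i, ahat i * x' i) + aL * x (Fin.last (m + 1)) = 1 := by
    have h1 : ∑ i, ahat i * x' i
        = (∑ i, ahat i * x i.castSucc) + (∑ i, ahat i * vtil i) * x (Fin.last (m + 1)) := by
      rw [Finset.sum_mul, ← Finset.sum_add_distrib]
      refine Finset.sum_congr rfl fun i _ => ?_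
      rw [hx'def]
      noncomm_ring
    have h2 : (∑ i : Fin (m + 1), ahat i * x i.castSucc) + a (Fin.last (m + 1)) * x (Fin.last (m + 1)) = 1 := by
      simp only [hahatdef]
      rw [← Fin.sum_univ_castSucc (f := fun i => a i * x i)]
      exact hsum
    rw [h1, haLdef, sub_mul, ← h2]
    abel
  set b' : Fin (m + 1) → R := Matrix.vecMul ahat M' with hb'def
  have hb'H : (∑ i, b' i * y i) + aL * x (Fin.last (m + 1)) = 1 := by
    have hdd : ∑ i, b' i * y i = ∑ i, ahat i * x' i := by
      have e1 : ∑ i, b' i * y i = dotProduct b' y := rfl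
      rw [e1, hb'def, hydef, Matrix.dotProduct_mulVec, Matrix.vecMul_vecMul, hM'M,
        Matrix.vecMul_one]
      rfl
    rw [hdd]; exact hH
  set z : R := 1 - y 0 with hzdef
  have hzJ : z ∈ J := by
    have h1 := J.neg_mem hy0J
    rw [neg_sub] at h1
    exact h1
  set cc : R := z * aL with hccdef
  have hccJ : cc ∈ J := J.mul_mem_right _ _ hzJ
  set q : Fin (m + 2) → R := Fin.snoc y (cc * x (Fin.last (m + 1))) with hqdef
  have hqcast : ∀ i : Fin (m + 1), q i.castSucc = y i := fun i => by rw [hqdef, Fin.snoc_castSucc]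
  have hq0 : q 0 = y 0 := by
    rw [show (0 : Fin (m + 2)) = ((0 : Fin (m + 1)).castSucc) from (Fin.castSucc_zero).symm]
    exact hqcast 0
  have hqlast : q (Fin.last (m + 1)) = cc * x (Fin.last (m + 1)) := by rw [hqdef, Fin.snoc_last]
  have hy0 : y 0 = 1 - z := by rw [hzdef]; abel
  have hqrel : RelUnimodular J q := by
    refine ⟨?_, ?_, Fin.snoc (fun i => (if i = 0 then 1 + z else 0) + z * z * b' i) z, ?_, ?_, ?_⟩
    · rw [hq0]; exact hy0J
    · intro i hi
      rcases Fin.eq_castSucc_or_eq_last i with ⟨j, rfl⟩ | rfl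
      · rw [hqcast]
        exact hyiJ j (fun h => hi (by rw [h, Fin.castSucc_zero]))
      · rw [hqlast]; exact J.mul_mem_right _ _ hccJ
    · have h0 : (Fin.snoc (fun i => (if i = 0 then 1 + z else 0) + z * z * b' i) z : Fin (m + 2) → R) 0
          = (1 + z) + z * z * b' 0 := by
        rw [show (0 : Fin (m + 2)) = ((0 : Fin (m + 1)).castSucc) from (Fin.castSucc_zero).symm,
          Fin.snoc_castSucc]
        simp
      rw [h0]
      have h1 : (1 + z) + z * z * b' 0 - 1 = z + z * z * b' 0 := by abel
      rw [h1]
      exact J.add_mem hzJ (J.mul_mem_right _ _ (J.mul_mem_right _ _ hzJ))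
    · intro i hi
      rcases Fin.eq_castSucc_or_eq_last i with ⟨j, rfl⟩ | rfl
      · rw [Fin.snoc_castSucc]
        have hj : j ≠ 0 := fun h => hi (by rw [h, Fin.castSucc_zero])
        rw [if_neg hj, zero_add]
        exact J.mul_mem_right _ _ (J.mul_mem_right _ _ hzJ)
      · rw [Fin.snoc_last]; exact hzJ
    · rw [Fin.sum_univ_castSucc]
      simp only [Fin.snoc_castSucc, Fin.snoc_last]
      have hsum1 : ∑ i : Fin (m + 1), ((if i = 0 then 1 + z else 0) + z * z * b' i) * q i.castSucc
          = (1 + z) * y 0 + ∑ i : Fin (m + 1), z * z * (b' i * y i) := by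
        have e1 : ∀ i : Fin (m + 1), ((if i = 0 then 1 + z else 0) + z * z * b' i) * q i.castSucc
            = (if i = 0 then (1 + z) * y i else 0) + z * z * (b' i * y i) := by
          intro i
          rw [hqcast]
          split <;> noncomm_ring
        rw [Finset.sum_congr rfl fun i _ => e1 i, Finset.sum_add_distrib]
        congr 1
        rw [Fin.sum_univ_succ]
        simp [Fin.succ_ne_zero]
      rw [hsum1]
      have hz2 : ∑ i : Fin (m + 1), z * z * (b' i * y i) = z * z * ∑ i, b' i * y i := by
        rw [Finset.mul_sum]
      rw [hz2, hqlast, hy0]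
      have hccx : z * (cc * x (Fin.last (m + 1))) = z * z * (aL * x (Fin.last (m + 1))) := by
        rw [hccdef]; noncomm_ring
      rw [hccx]
      calc (1 + z) * (1 - z) + z * z * (∑ i, b' i * y i) + z * z * (aL * x (Fin.last (m + 1)))
          = (1 + z) * (1 - z) + z * z * ((∑ i, b' i * y i) + aL * x (Fin.last (m + 1))) := by
            noncomm_ring
        _ = 1 := by rw [hb'H]; noncomm_ring
  obtain ⟨w, hwJ, hq'⟩ := hJsr m hm q hqrel
  set q' : Fin (m + 1) → R := fun i => q i.castSucc + w i * q (Fin.last (m + 1)) with hq'def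
  have hq'N : RelUnimodular N q' := relUnimodular_of_le (fun r hr => ((hJN r).mp hr).1) hq'
  have htrans : RelUnimodular N (Matrix.mulVec M' q') := relUnimodular_mulVec hMc hM'c hMM' hq'N
  refine ⟨fun i => vtil i + Matrix.mulVec M' (fun j => w j * cc) i, ?_, ?_⟩
  · intro i
    refine N.add_mem (hvtilN i) ?_
    show (∑ j, M' i j * (w j * cc)) ∈ N
    exact N.finsetSum_mem _ _ fun j _ =>
      N.mul_mem_left _ _ (((hJN _).mp (J.mul_mem_right _ _ (hwJ j))).1)
  · have hkey : (fun i : Fin (m + 1) => x i.castSucc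
          + (vtil i + Matrix.mulVec M' (fun j => w j * cc) i) * x (Fin.last (m + 1)))
        = Matrix.mulVec M' q' := by
      funext i
      have h1 : Matrix.mulVec M' q' i
          = Matrix.mulVec M' y i
            + Matrix.mulVec M' (fun j => w j * cc) i * x (Fin.last (m + 1)) := by
        show ∑ j, M' i j * q' j = (∑ j, M' i j * y j) + (∑ j, M' i j * (w j * cc)) * x (Fin.last (m + 1))
        have e1 : ∀ j, M' i j * q' j
            = M' i j * y j + (M' i j * (w j * cc)) * x (Fin.last (m + 1)) := by
          intro j
          rw [hq'def]
          simp only []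
          rw [hqcast, hqlast]
          noncomm_ring
        rw [Finset.sum_congr rfl fun j _ => e1 j, Finset.sum_add_distrib, Finset.sum_mul]
      have h2 : Matrix.mulVec M' y i = x' i := by
        rw [hydef, Matrix.mulVec_mulVec, hM'M, Matrix.one_mulVec]
      rw [h1, h2, hx'def]
      noncomm_ring
    show RelUnimodular N (fun i : Fin (m + 1) => x i.castSucc
        + (vtil i + Matrix.mulVec M' (fun j => w j * cc) i) * x (Fin.last (m + 1)))
    rw [hkey]
    exact htrans

end Upper

section Lower

theorem lower_bound {R A : Type*} [Ring R] [Ring A] (ψ : R →+* A) (N : TwoSidedIdeal R)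
    (hlift : ∀ a : A, ∃ r, r ∈ N ∧ ψ r = a)
    (n : ℕ) (hn : 2 ≤ n) (hER : ERleq A (n - 1)) (hNsr : RelSRleq N (n - 1)) :
    SRleq A (n - 1) := by
  intro m hm β hβ
  classical
  obtain ⟨m', rfl⟩ : ∃ m', m = m' + 1 := ⟨m - 1, by omega⟩
  obtain ⟨L, hLe, hLp⟩ := hER (m' + 2) (by omega) β _ hβ unimodular_e1
  obtain ⟨L', hL'e, hL'L, hLL'⟩ := exists_inv_list L hLe
  obtain ⟨M, M', hMc, hM'c, hMM', hM'M, hMψ⟩ := lift_elem_list ψ hlift L' hL'e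
  set s : Fin (m' + 2) → R := fun i => if i = 0 then 1 else 0 with hsdef
  have hsshape : ColShape N s := by
    constructor
    · rw [hsdef]
      simp only [show ((0 : Fin (m' + 2)) = 0) = True from by simp, if_true, sub_self]
      exact N.zero_mem
    · intro i hi
      rw [hsdef]
      simp only [if_neg hi]
      exact N.zero_mem
  set x : Fin (m' + 2) → R := Matrix.mulVec M s with hxdef
  have hxψ : (fun i => ψ (x i)) = β := by
    have h1 := map_mulVec ψ M s
    rw [← hxdef] at h1
    have h2 : (fun j => ψ (s j)) = (fun i : Fin (m' + 2) => if i = 0 then (1 : A) else 0) := by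
      funext j
      rw [hsdef]
      simp only [apply_ite ψ, map_one, map_zero]
    rw [h1, hMψ, h2]
    have h3 := congrArg (fun v => Matrix.mulVec L'.prod v) hLp
    simp only [Matrix.mulVec_mulVec, hL'L, Matrix.one_mulVec] at h3
    exact h3.symm
  have hxrel : RelUnimodular N x := by
    have hsh : ColShape N x := colShape_mulVec hsshape hMc
    have hash : ColShape N (Matrix.vecMul s M') := colShape_vecMul hsshape hM'c
    refine ⟨hsh.1, hsh.2, Matrix.vecMul s M', hash.1, hash.2, ?_⟩
    have e1 : ∑ i, Matrix.vecMul s M' i * x i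
        = dotProduct (Matrix.vecMul s M') (Matrix.mulVec M s) := by rw [hxdef]; rfl
    rw [e1, Matrix.dotProduct_mulVec, Matrix.vecMul_vecMul, hM'M, Matrix.vecMul_one]
    rw [hsdef]
    show (∑ i : Fin (m' + 2), (if i = 0 then (1:R) else 0) * (if i = 0 then (1:R) else 0)) = 1
    rw [Fin.sum_univ_succ]
    simp [Fin.succ_ne_zero]
  obtain ⟨v, hvN, hv⟩ := hNsr m' (by omega) x hxrel
  obtain ⟨-, -, e, -, -, hesum⟩ := hv
  refine ⟨fun i => ψ (v i), fun i => ψ (e i), ?_⟩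
  have h1 : ∀ i : Fin (m' + 1),
      ψ (e i) * (β i.castSucc + ψ (v i) * β (Fin.last (m' + 1)))
        = ψ (e i * (x i.castSucc + v i * x (Fin.last (m' + 1)))) := by
    intro i
    have hb1 : β i.castSucc = ψ (x i.castSucc) := (congrFun hxψ i.castSucc).symm
    have hb2 : β (Fin.last (m' + 1)) = ψ (x (Fin.last (m' + 1))) := by
      have := congrFun hxψ (Fin.last (m' + 1))
      exact (congrFun hxψ _).symm
    rw [hb1, hb2]
    simp [map_add, map_mul]
  calc ∑ i, ψ (e i) * (β i.castSucc + ψ (v i) * β (Fin.last (m' + 1)))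
      = ∑ i, ψ (e i * (x i.castSucc + v i * x (Fin.last (m' + 1)))) :=
        Finset.sum_congr rfl fun i _ => h1 i
    _ = ψ (∑ i, e i * (x i.castSucc + v i * x (Fin.last (m' + 1)))) := (map_sum ψ _ _).symm
    _ = 1 := by rw [hesum, map_one]

end Lower


section Psi

variable {B : Type*} [NonUnitalRing B] {A : Type*} [Ring A]

/-- the additive map `B →+ A` induced by the quotient and an iso. -/
noncomputable def qbar (I : TwoSidedIdeal B) (e : I.ringCon.Quotient ≃+* A) : B →+ A where
  toFun b := e (b : I.ringCon.Quotient)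
  map_zero' := by
    show e ((0 : B) : I.ringCon.Quotient) = 0
    rw [RingCon.coe_zero, map_zero]
  map_add' b b' := by
    show e (↑(b + b') : I.ringCon.Quotient) = e (↑b : I.ringCon.Quotient) + e (↑b' : I.ringCon.Quotient)
    rw [RingCon.coe_add, map_add]

theorem qbar_mul (I : TwoSidedIdeal B) (e : I.ringCon.Quotient ≃+* A) (b b' : B) :
    qbar I e (b * b') = qbar I e b * qbar I e b' := by
  show e (↑(b * b') : I.ringCon.Quotient) = e (↑b : I.ringCon.Quotient) * e (↑b' : I.ringCon.Quotient)
  rw [RingCon.coe_mul, map_mul]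

theorem qbar_surj (I : TwoSidedIdeal B) (e : I.ringCon.Quotient ≃+* A) :
    Function.Surjective (qbar I e) := by
  intro a
  obtain ⟨b, hb⟩ := Quot.exists_rep (e.symm a)
  refine ⟨b, ?_⟩
  show e (↑b : I.ringCon.Quotient) = a
  have : (↑b : I.ringCon.Quotient) = e.symm a := hb
  rw [this, RingEquiv.apply_symm_apply]

theorem qbar_ker (I : TwoSidedIdeal B) (e : I.ringCon.Quotient ≃+* A) (b : B) :
    qbar I e b = 0 ↔ b ∈ I := by
  show e (↑b : I.ringCon.Quotient) = 0 ↔ _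
  rw [show (0 : A) = e 0 from (map_zero e).symm]
  rw [(EmbeddingLike.apply_eq_iff_eq e)]
  rw [show (0 : I.ringCon.Quotient) = ((0 : B) : I.ringCon.Quotient) from (RingCon.coe_zero _).symm]
  rw [RingCon.eq]
  exact (TwoSidedIdeal.mem_iff I b).symm

/-- The canonical unital ring hom from the unitization to `A`. -/
noncomputable def psiHom (I : TwoSidedIdeal B) (e : I.ringCon.Quotient ≃+* A) :
    Unitization ℤ B →+* A where
  toFun x := x.fst • (1 : A) + qbar I e x.snd
  map_one' := by
    rw [Unitization.fst_one, Unitization.snd_one, map_zero, add_zero, one_smul]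
  map_zero' := by
    rw [Unitization.fst_zero, Unitization.snd_zero, map_zero, add_zero, zero_smul]
  map_add' x y := by
    rw [Unitization.fst_add, Unitization.snd_add, map_add, add_smul]
    abel
  map_mul' x y := by
    rw [Unitization.fst_mul, Unitization.snd_mul, map_add, map_add, map_zsmul, map_zsmul,
      qbar_mul]
    rw [mul_add, add_mul, add_mul]
    simp only [mul_smul_comm, smul_mul_assoc, one_mul, mul_one, smul_smul]
    rw [mul_comm x.fst y.fst]
    abel

end Psi

section Mem

variable {B : Type*} [NonUnitalRing B] {A : Type*} [Ring A]

theorem mem_nuIdeal (x : Unitization ℤ B) : x ∈ nuIdeal B ↔ x.fst = 0 :=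
  TwoSidedIdeal.mem_mk' _ _ _ _ _ _ x

theorem mem_liftIdeal (I : TwoSidedIdeal B) (x : Unitization ℤ B) :
    x ∈ liftIdeal I ↔ x.fst = 0 ∧ x.snd ∈ I :=
  TwoSidedIdeal.mem_mk' _ _ _ _ _ _ x

theorem psiHom_lift (I : TwoSidedIdeal B) (e : I.ringCon.Quotient ≃+* A) :
    ∀ a : A, ∃ r, r ∈ nuIdeal B ∧ psiHom I e r = a := by
  intro a
  obtain ⟨b, hb⟩ := qbar_surj I e a
  refine ⟨(b : Unitization ℤ B), (mem_nuIdeal _).mpr (Unitization.fst_inr ℤ b), ?_⟩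
  show ((b : Unitization ℤ B)).fst • (1 : A) + qbar I e ((b : Unitization ℤ B)).snd = a
  rw [Unitization.fst_inr, Unitization.snd_inr, zero_smul, zero_add, hb]

theorem psiHom_ker (I : TwoSidedIdeal B) (e : I.ringCon.Quotient ≃+* A) :
    ∀ x : Unitization ℤ B, x ∈ liftIdeal I ↔ x ∈ nuIdeal B ∧ psiHom I e x = 0 := by
  intro x
  rw [mem_liftIdeal, mem_nuIdeal]
  constructor
  · rintro ⟨h1, h2⟩
    refine ⟨h1, ?_⟩
    show x.fst • (1 : A) + qbar I e x.snd = 0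
    rw [h1, zero_smul, zero_add, (qbar_ker I e _).mpr h2]
  · rintro ⟨h1, h2⟩
    refine ⟨h1, ?_⟩
    rw [show psiHom I e x = x.fst • (1 : A) + qbar I e x.snd from rfl, h1, zero_smul,
      zero_add] at h2
    exact (qbar_ker I e _).mp h2

end Mem

/-- Corollary 1.9: let `A` be a unital `K`-algebra with `sr(A) = n ≥ 2` and `er(A) < n`.
Then for any (possibly non-unital) `K`-algebra `B` and two-sided ideal `I` of `B` with
`B/I ≅ A` and `sr(I) ≤ n`, one has `sr(B) = n`. -/
theorem sr_nonunital_extension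
    (K : Type*) [Field K] {A B : Type*} [Ring A] [Algebra K A]
    [NonUnitalRing B] [Module K B] [SMulCommClass K B B] [IsScalarTower K B B]
    (n : ℕ) (hn : 2 ≤ n) (hsr : sr A = n) (her : er A < (n : ℕ∞))
    (I : TwoSidedIdeal B) (iso : Nonempty (I.ringCon.Quotient ≃+* A))
    (hI : relSr (R := Unitization ℤ B) (liftIdeal I) ≤ (n : ℕ∞)) :
    srNU B = n := by
  obtain ⟨e⟩ := iso
  have hlift : ∀ a : A, ∃ r, r ∈ nuIdeal B ∧ psiHom I e r = a := psiHom_lift I e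
  have hJN : ∀ x : Unitization ℤ B,
      x ∈ liftIdeal I ↔ x ∈ nuIdeal B ∧ psiHom I e x = 0 := psiHom_ker I e
  have hSR : SRleq A n := of_sInf_le (fun h => SRleq_mono h) (le_of_eq hsr)
  have hER : ERleq A (n - 1) := pred_of_sInf_lt (fun h => ERleq_mono h) her
  have hJsr : RelSRleq (R := Unitization ℤ B) (liftIdeal I) n := of_sInf_le (fun h => RelSRleq_mono h) hI
  have hupper : RelSRleq (R := Unitization ℤ B) (nuIdeal B) n :=
    upper_bound (R := Unitization ℤ B) (psiHom I e) (nuIdeal B) (liftIdeal I) hlift hJN n (by omega) hSR hER hJsr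
  show relSr (R := Unitization ℤ B) (nuIdeal B) = (n : ℕ∞)
  refine le_antisymm (sInf_le ⟨n, rfl, hupper⟩) ?_
  refine le_sInf ?_
  rintro c ⟨k, rfl, hk⟩
  by_contra hlt
  push_neg at hlt
  have hkn : k < n := by exact_mod_cast hlt
  have h1 : RelSRleq (R := Unitization ℤ B) (nuIdeal B) (n - 1) := RelSRleq_mono (by omega) hk
  have h2 : SRleq A (n - 1) := lower_bound (R := Unitization ℤ B) (psiHom I e) (nuIdeal B) hlift n hn hER h1
  have h3 : sr A ≤ ((n - 1 : ℕ) : ℕ∞) := sInf_le ⟨n - 1, rfl, h2⟩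
  rw [hsr] at h3
  have h4 : n ≤ n - 1 := by exact_mod_cast h3
  omega
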